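/- Let (w_i)_{i=1}^∞ be a non-increasing sequence of non-negative reals such that w_i → 0 and ∑_{i=1}^∞ w_i = ∞. Then for every constant C < ∞ there exists a non-increasing sequence (a_i)_{i=1}^∞ of non-negative reals such that ∑_{i=1}^∞ a_i w_i > C · sup_{n∈ℕ} ∑_{i=1}^n a_i w_{1+n-i}. -/

import Mathlib

open scoped NNReal ENNReal
open Finset Filter

namespace Stmt4Aux

/-- Partial sums of `w`. -/
noncomputable def S (w : ℕ → ℝ≥0) (n : ℕ) : ℝ≥0 := ∑ i ∈ Finset.range n, w i

lemma S_mono (w : ℕ → ℝ≥0) : Monotone (S w) := fun _ _ h =>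
  Finset.sum_le_sum_of_subset (Finset.range_subset_range.2 h)

lemma S_pos (w : ℕ → ℝ≥0) (hpos : 0 < w 0) {L : ℕ} (hL : 1 ≤ L) : 0 < S w L :=
  lt_of_lt_of_le hpos
    (Finset.single_le_sum (f := w) (fun i _ => zero_le) (Finset.mem_range.2 hL))

/-- Shifted convolution-type sums are bounded by initial partial sums. -/
lemma sum_w_le (w : ℕ → ℝ≥0) (hw : Antitone w) (n u v : ℕ) (hvn : v ≤ n) :
    ∑ i ∈ Finset.Ico u v, w (n - 1 - i) ≤ S w (v - u) := by
  rw [Finset.sum_Ico_eq_sum_range, ← Finset.sum_range_reflect]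
  refine Finset.sum_le_sum fun j hj => ?_
  rw [Finset.mem_range] at hj
  exact hw (by omega)

lemma exists_S_gt (w : ℕ → ℝ≥0) (hdiv : ∑' i : ℕ, ((w i : ℝ≥0) : ℝ≥0∞) = ⊤) (M : ℝ≥0) :
    ∃ m, M < S w m := by
  have h : (M : ℝ≥0∞) < ∑' i : ℕ, (w i : ℝ≥0∞) := by
    rw [hdiv]; exact ENNReal.coe_lt_top
  rw [ENNReal.tsum_eq_iSup_sum, lt_iSup_iff] at h
  obtain ⟨s, hs⟩ := h
  obtain ⟨m, hm⟩ := s.exists_nat_subset_range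
  refine ⟨m, ?_⟩
  have h2 : (∑ i ∈ s, (w i : ℝ≥0∞)) ≤ ∑ i ∈ Finset.range m, (w i : ℝ≥0∞) :=
    Finset.sum_le_sum_of_subset hm
  have h3 : (M : ℝ≥0∞) < ((S w m : ℝ≥0) : ℝ≥0∞) := by
    refine hs.trans_le (h2.trans_eq ?_)
    rw [S, ENNReal.coe_finset_sum]
  exact_mod_cast h3

lemma exists_step (w : ℕ → ℝ≥0) (h0 : Tendsto w atTop (nhds 0))
    (hdiv : ∑' i : ℕ, ((w i : ℝ≥0) : ℝ≥0∞) = ⊤) (n : ℕ) (P : ℝ≥0) :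
    ∃ L : ℕ, n < L ∧ 2 * S w n ≤ S w L ∧ w L * P ≤ 1 := by
  obtain ⟨m, hm⟩ := exists_S_gt w hdiv (2 * S w n)
  have hev : ∀ᶠ L in atTop, w L < (P + 1)⁻¹ :=
    h0.eventually_lt_const (by positivity)
  obtain ⟨L0, hL0⟩ := eventually_atTop.1 hev
  refine ⟨max (max (n + 1) m) L0, ?_, ?_, ?_⟩
  · have h1 := le_max_left (max (n + 1) m) L0
    have h2 := le_max_left (n + 1) m
    omega
  · refine hm.le.trans (S_mono w ?_)
    have h1 := le_max_left (max (n + 1) m) L0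
    have h2 := le_max_right (n + 1) m
    omega
  · have h1 : w (max (max (n + 1) m) L0) < (P + 1)⁻¹ := hL0 _ (le_max_right _ _)
    calc w (max (max (n + 1) m) L0) * P ≤ (P + 1)⁻¹ * (P + 1) :=
          mul_le_mul' h1.le (le_add_right le_rfl)
      _ = 1 := inv_mul_cancel₀ (by positivity)

/-- The recursive block data: state `(N_k, L_k, P_k)`. -/
noncomputable def g (w : ℕ → ℝ≥0) (h0 : Tendsto w atTop (nhds 0))
    (hdiv : ∑' i : ℕ, ((w i : ℝ≥0) : ℝ≥0∞) = ⊤) : ℕ → ℕ × ℕ × ℝ≥0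
  | 0 => (0, 0, 0)
  | (k + 1) =>
      let p := g w h0 hdiv k
      let L := (exists_step w h0 hdiv p.1 p.2.2).choose
      (p.1 + L, L, p.2.2 + (L : ℝ≥0) * (S w L)⁻¹)

lemma g_spec (w : ℕ → ℝ≥0) (h0 : Tendsto w atTop (nhds 0))
    (hdiv : ∑' i : ℕ, ((w i : ℝ≥0) : ℝ≥0∞) = ⊤) (k : ℕ) :
    (g w h0 hdiv (k + 1)).1 = (g w h0 hdiv k).1 + (g w h0 hdiv (k + 1)).2.1 ∧
    (g w h0 hdiv (k + 1)).2.2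
      = (g w h0 hdiv k).2.2
        + ((g w h0 hdiv (k + 1)).2.1 : ℝ≥0) * (S w ((g w h0 hdiv (k + 1)).2.1))⁻¹ ∧
    (g w h0 hdiv k).1 < (g w h0 hdiv (k + 1)).2.1 ∧
    2 * S w ((g w h0 hdiv k).1) ≤ S w ((g w h0 hdiv (k + 1)).2.1) ∧
    w ((g w h0 hdiv (k + 1)).2.1) * (g w h0 hdiv k).2.2 ≤ 1 := by
  have h := (exists_step w h0 hdiv (g w h0 hdiv k).1 (g w h0 hdiv k).2.2).choose_spec
  exact ⟨rfl, rfl, h.1, h.2.1, h.2.2⟩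

end Stmt4Aux

open Stmt4Aux

/-- If `(w_i)` is non-increasing, tends to `0` and `∑ w_i = ∞`, then for every
`C < ∞` there exists a non-increasing sequence `(a_i)` of non-negative reals with
`∑ a_i w_i > C · sup_n ∑_{i=1}^n a_i w_{1+n-i}`. -/
theorem stmt_4 (w : ℕ → ℝ≥0) (hw : Antitone w)
    (h0 : Filter.Tendsto w Filter.atTop (nhds 0))
    (hdiv : ∑' i : ℕ, (w i : ℝ≥0∞) = ⊤) :
    ∀ C : ℝ≥0∞, C < ⊤ → ∃ a : ℕ → ℝ≥0, Antitone a ∧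
      C * (⨆ n : ℕ, ∑ i ∈ Finset.range n, ((a i * w (n - 1 - i) : ℝ≥0) : ℝ≥0∞))
        < ∑' i : ℕ, ((a i * w i : ℝ≥0) : ℝ≥0∞) := by
  intro C hC
  lift C to ℝ≥0 using hC.ne
  -- w 0 > 0
  have hw0 : 0 < w 0 := by
    rcases eq_or_lt_of_le (zero_le : 0 ≤ w 0) with h | h
    · exfalso
      have hz : ∀ i, w i = 0 := fun i => le_antisymm (le_trans (hw (Nat.zero_le i)) h.ge) zero_le
      simp [hz] at hdiv
    · exact h
  -- block data
  obtain ⟨N, Lf, P, hN0, hL0, hP0, hNsucc, hPsucc, hLgt, hSL, hwLP⟩ :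
      ∃ (N : ℕ → ℕ) (Lf : ℕ → ℕ) (P : ℕ → ℝ≥0),
        N 0 = 0 ∧ Lf 0 = 0 ∧ P 0 = 0 ∧
        (∀ k, N (k + 1) = N k + Lf (k + 1)) ∧
        (∀ k, P (k + 1) = P k + (Lf (k + 1) : ℝ≥0) * (S w (Lf (k + 1)))⁻¹) ∧
        (∀ k, N k < Lf (k + 1)) ∧
        (∀ k, 2 * S w (N k) ≤ S w (Lf (k + 1))) ∧
        (∀ k, w (Lf (k + 1)) * P k ≤ 1) :=
    ⟨fun k => (g w h0 hdiv k).1, fun k => (g w h0 hdiv k).2.1, fun k => (g w h0 hdiv k).2.2,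
      rfl, rfl, rfl, fun k => (g_spec w h0 hdiv k).1, fun k => (g_spec w h0 hdiv k).2.1,
      fun k => (g_spec w h0 hdiv k).2.2.1, fun k => (g_spec w h0 hdiv k).2.2.2.1,
      fun k => (g_spec w h0 hdiv k).2.2.2.2⟩
  have hLleN : ∀ k, Lf k ≤ N k := by
    intro k
    cases k with
    | zero => rw [hL0]; omega
    | succ k => have := hNsucc k; omega
  have hLf_mono : Monotone Lf := by
    apply monotone_nat_of_le_succ
    intro k
    have h1 := hLleN k
    have h2 := hLgt k
    omega
  have hLf_pos : ∀ k, 1 ≤ k → 1 ≤ Lf k := by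
    intro k hk
    have h1 : 0 < Lf 1 := by have h := hLgt 0; simp only [Nat.zero_add] at h; omega
    have := hLf_mono hk
    omega
  have hN_mono : Monotone N := by
    apply monotone_nat_of_le_succ
    intro k
    have := hNsucc k; omega
  have hN_strict : StrictMono N := by
    apply strictMono_nat_of_lt_succ
    intro k
    have h1 := hNsucc k
    have h2 := hLgt k
    omega
  have hkN : ∀ k, k ≤ N k := by
    intro k
    induction k with
    | zero => omega
    | succ k ih => have := hN_strict (show k < k + 1 by omega); omega
  have hP_mono : Monotone P := by
    apply monotone_nat_of_le_succ
    intro k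
    rw [hPsucc k]
    exact le_add_right le_rfl
  have hSLf_pos : ∀ k, 1 ≤ k → 0 < S w (Lf k) := fun k hk => S_pos w hw0 (hLf_pos k hk)
  -- number of blocks
  set K : ℕ := ⌊(6 : ℝ≥0) * C⌋₊ + 1 with hKdef
  have hK : 6 * C < (K : ℝ≥0) := by
    have := Nat.lt_floor_add_one ((6 : ℝ≥0) * C)
    push_cast [hKdef]
    exact_mod_cast this
  -- the sequence a
  set a : ℕ → ℝ≥0 := fun i =>
    if i < N K then (S w (Lf (Nat.findGreatest (fun k => N k ≤ i) K + 1)))⁻¹ else 0 with ha_def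
  -- block identification
  have hbk : ∀ j i, 1 ≤ j → j ≤ K → N (j - 1) ≤ i → i < N j →
      Nat.findGreatest (fun k => N k ≤ i) K = j - 1 := by
    intro j i h1 h2 h3 h4
    rw [Nat.findGreatest_eq_iff]
    refine ⟨by omega, fun _ => h3, fun t ht htK => ?_⟩
    simp only [not_le]
    exact lt_of_lt_of_le h4 (hN_mono (by omega))
  have ha_eq : ∀ j, 1 ≤ j → j ≤ K → ∀ i, N (j - 1) ≤ i → i < N j →
      a i = (S w (Lf j))⁻¹ := by
    intro j h1 h2 i h3 h4
    have h5 : i < N K := lt_of_lt_of_le h4 (hN_mono h2)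
    rw [ha_def]
    simp only [if_pos h5]
    rw [hbk j i h1 h2 h3 h4]
    rw [show j - 1 + 1 = j from by omega]
  have ha_zero : ∀ i, N K ≤ i → a i = 0 := by
    intro i hi
    rw [ha_def]
    simp only [if_neg (not_lt.2 hi)]
  have ha_le : ∀ j, 1 ≤ j → ∀ i, N (j - 1) ≤ i → i < N j → a i ≤ (S w (Lf j))⁻¹ := by
    intro j h1 i h3 h4
    by_cases h2 : j ≤ K
    · exact (ha_eq j h1 h2 i h3 h4).le
    · have : N K ≤ N (j - 1) := hN_mono (by omega)
      rw [ha_zero i (by omega)]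
      exact zero_le
  -- antitonicity
  have ha_anti : Antitone a := by
    intro i i' h
    by_cases h2 : i' < N K
    · have h1 : i < N K := lt_of_le_of_lt h h2
      rw [ha_def]
      simp only [if_pos h1, if_pos h2]
      have hb : Nat.findGreatest (fun k => N k ≤ i) K
          ≤ Nat.findGreatest (fun k => N k ≤ i') K :=
        Nat.findGreatest_mono (fun n hn => le_trans hn h) le_rfl
      have hpos : 0 < S w (Lf (Nat.findGreatest (fun k => N k ≤ i) K + 1)) :=
        hSLf_pos _ (by omega)
      have hle : S w (Lf (Nat.findGreatest (fun k => N k ≤ i) K + 1))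
          ≤ S w (Lf (Nat.findGreatest (fun k => N k ≤ i') K + 1)) :=
        S_mono w (hLf_mono (by omega))
      gcongr
    · rw [ha_zero i' (not_lt.1 h2)]
      exact zero_le
  -- bound on the partial sums of a
  have hsum_a : ∀ t, ∑ i ∈ Finset.range (N t), a i ≤ P t := by
    intro t
    induction t with
    | zero => simp [hN0, hP0]
    | succ t ih =>
      have hsplit : ∑ i ∈ Finset.range (N (t + 1)), a i
          = ∑ i ∈ Finset.range (N t), a i + ∑ i ∈ Finset.Ico (N t) (N (t + 1)), a i :=
        (Finset.sum_range_add_sum_Ico _ (hN_mono (Nat.le_succ t))).symm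
      rw [hsplit, hPsucc t]
      refine add_le_add ih ?_
      have hcard : (Finset.Ico (N t) (N (t + 1))).card = Lf (t + 1) := by
        rw [Nat.card_Ico]
        have := hNsucc t; omega
      calc ∑ i ∈ Finset.Ico (N t) (N (t + 1)), a i
          ≤ (Finset.Ico (N t) (N (t + 1))).card • (S w (Lf (t + 1)))⁻¹ := by
            refine Finset.sum_le_card_nsmul _ _ _ fun i hi => ?_
            rw [Finset.mem_Ico] at hi
            exact ha_le (t + 1) (by omega) i (by simpa using hi.1) hi.2
        _ = (Lf (t + 1) : ℝ≥0) * (S w (Lf (t + 1)))⁻¹ := by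
            rw [hcard, nsmul_eq_mul]
  -- lower bound for the diagonal sum
  have hlow : ∀ m, m ≤ K → (m : ℝ≥0) ≤ 2 * ∑ i ∈ Finset.range (N m), a i * w i := by
    intro m hm
    induction m with
    | zero => simp
    | succ m ih =>
      have ihm := ih (by omega)
      have hsplit : ∑ i ∈ Finset.range (N (m + 1)), a i * w i
          = ∑ i ∈ Finset.range (N m), a i * w i
            + ∑ i ∈ Finset.Ico (N m) (N (m + 1)), a i * w i :=
        (Finset.sum_range_add_sum_Ico _ (hN_mono (Nat.le_succ m))).symm
      have hblock : ∑ i ∈ Finset.Ico (N m) (N (m + 1)), a i * w i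
          = (S w (Lf (m + 1)))⁻¹ * ∑ i ∈ Finset.Ico (N m) (N (m + 1)), w i := by
        rw [Finset.mul_sum]
        refine Finset.sum_congr rfl fun i hi => ?_
        rw [Finset.mem_Ico] at hi
        rw [ha_eq (m + 1) (by omega) hm i (by simpa using hi.1) hi.2]
      have hT : S w (Lf (m + 1)) ≤ 2 * ∑ i ∈ Finset.Ico (N m) (N (m + 1)), w i := by
        have h1 : S w (N m) + ∑ i ∈ Finset.Ico (N m) (N (m + 1)), w i = S w (N (m + 1)) := by
          rw [S, S]
          exact Finset.sum_range_add_sum_Ico _ (hN_mono (Nat.le_succ m))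
        have h2 : S w (Lf (m + 1)) ≤ S w (N (m + 1)) := by
          refine S_mono w ?_
          have := hNsucc m; omega
        have h3 := hSL m
        have h4 : 2 * S w (N m) + S w (Lf (m + 1))
            ≤ 2 * S w (N m) + 2 * ∑ i ∈ Finset.Ico (N m) (N (m + 1)), w i := by
          calc 2 * S w (N m) + S w (Lf (m + 1))
              ≤ S w (Lf (m + 1)) + S w (Lf (m + 1)) := add_le_add_left h3 _
            _ = 2 * S w (Lf (m + 1)) := (two_mul _).symm
            _ ≤ 2 * S w (N (m + 1)) := mul_le_mul_right h2 2
            _ = 2 * (S w (N m) + ∑ i ∈ Finset.Ico (N m) (N (m + 1)), w i) := by rw [h1]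
            _ = 2 * S w (N m) + 2 * ∑ i ∈ Finset.Ico (N m) (N (m + 1)), w i := by ring
        exact le_of_add_le_add_left h4
      have hone : 1 ≤ 2 * ∑ i ∈ Finset.Ico (N m) (N (m + 1)), a i * w i := by
        have hpos := hSLf_pos (m + 1) (by omega)
        calc (1 : ℝ≥0) = (S w (Lf (m + 1)))⁻¹ * S w (Lf (m + 1)) :=
              (inv_mul_cancel₀ hpos.ne').symm
          _ ≤ (S w (Lf (m + 1)))⁻¹ * (2 * ∑ i ∈ Finset.Ico (N m) (N (m + 1)), w i) :=
              mul_le_mul_right hT _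
          _ = 2 * ((S w (Lf (m + 1)))⁻¹ * ∑ i ∈ Finset.Ico (N m) (N (m + 1)), w i) := by ring
          _ = 2 * ∑ i ∈ Finset.Ico (N m) (N (m + 1)), a i * w i := by rw [hblock]
      rw [hsplit]
      push_cast
      calc (m : ℝ≥0) + 1
          ≤ 2 * ∑ i ∈ Finset.range (N m), a i * w i
            + 2 * ∑ i ∈ Finset.Ico (N m) (N (m + 1)), a i * w i := add_le_add ihm hone
        _ = 2 * (∑ i ∈ Finset.range (N m), a i * w i
            + ∑ i ∈ Finset.Ico (N m) (N (m + 1)), a i * w i) := by ring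
  -- upper bound for convolutions
  have hconv : ∀ n, ∑ i ∈ Finset.range n, a i * w (n - 1 - i) ≤ 3 := by
    intro n
    rcases Nat.eq_zero_or_pos n with hn | hn
    · simp [hn]
    set m : ℕ := Nat.findGreatest (fun k => N k < n) n with hmdef
    have hm1 : N m < n :=
      Nat.findGreatest_spec (P := fun k => N k < n) (Nat.zero_le n) (show N 0 < n by omega)
    have hmlt : m < n := lt_of_le_of_lt (hkN m) hm1
    have hm2 : n ≤ N (m + 1) := by
      by_contra hcon
      push_neg at hcon
      exact Nat.findGreatest_is_greatest (P := fun k => N k < n) (n := n)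
        (Nat.lt_succ_self m) (by omega) hcon
    have hNm1 : N (m - 1) ≤ N m := hN_mono (by omega)
    have e1 : ∑ i ∈ Finset.range (N m), a i * w (n - 1 - i)
        + ∑ i ∈ Finset.Ico (N m) n, a i * w (n - 1 - i)
        = ∑ i ∈ Finset.range n, a i * w (n - 1 - i) :=
      Finset.sum_range_add_sum_Ico _ hm1.le
    have e2 : ∑ i ∈ Finset.range (N (m - 1)), a i * w (n - 1 - i)
        + ∑ i ∈ Finset.Ico (N (m - 1)) (N m), a i * w (n - 1 - i)
        = ∑ i ∈ Finset.range (N m), a i * w (n - 1 - i) :=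
      Finset.sum_range_add_sum_Ico _ hNm1
    have hsplit : ∑ i ∈ Finset.range n, a i * w (n - 1 - i)
        = ∑ i ∈ Finset.range (N (m - 1)), a i * w (n - 1 - i)
          + ∑ i ∈ Finset.Ico (N (m - 1)) (N m), a i * w (n - 1 - i)
          + ∑ i ∈ Finset.Ico (N m) n, a i * w (n - 1 - i) := by
      rw [← e1, ← e2]
    -- part 1
    have hpart1 : ∑ i ∈ Finset.range (N (m - 1)), a i * w (n - 1 - i) ≤ 1 := by
      rcases Nat.eq_zero_or_pos m with hm0 | hmpos
      · have : N (m - 1) = 0 := by rw [hm0]; exact hN0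
        simp [this]
      · have hNm : N m = N (m - 1) + Lf m := by
          have := hNsucc (m - 1)
          have hmm : m - 1 + 1 = m := by omega
          rw [hmm] at this
          exact this
        calc ∑ i ∈ Finset.range (N (m - 1)), a i * w (n - 1 - i)
            ≤ ∑ i ∈ Finset.range (N (m - 1)), a i * w (Lf m) := by
              refine Finset.sum_le_sum fun i hi => ?_
              rw [Finset.mem_range] at hi
              exact mul_le_mul_right (hw (by omega)) _
          _ = (∑ i ∈ Finset.range (N (m - 1)), a i) * w (Lf m) := by
              rw [Finset.sum_mul]
          _ ≤ P (m - 1) * w (Lf m) := mul_le_mul_left (hsum_a (m - 1)) _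
          _ ≤ 1 := by
              rw [mul_comm]
              have := hwLP (m - 1)
              have hmm : m - 1 + 1 = m := by omega
              rw [hmm] at this
              exact this
    -- part 2
    have hpart2 : ∑ i ∈ Finset.Ico (N (m - 1)) (N m), a i * w (n - 1 - i) ≤ 1 := by
      rcases Nat.eq_zero_or_pos m with hm0 | hmpos
      · simp [hm0]
      · have hNm : N m = N (m - 1) + Lf m := by
          have := hNsucc (m - 1)
          have hmm : m - 1 + 1 = m := by omega
          rw [hmm] at this
          exact this
        have hpos := hSLf_pos m hmpos
        calc ∑ i ∈ Finset.Ico (N (m - 1)) (N m), a i * w (n - 1 - i)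
            ≤ ∑ i ∈ Finset.Ico (N (m - 1)) (N m), (S w (Lf m))⁻¹ * w (n - 1 - i) := by
              refine Finset.sum_le_sum fun i hi => ?_
              rw [Finset.mem_Ico] at hi
              exact mul_le_mul_left (ha_le m hmpos i hi.1 hi.2) _
          _ = (S w (Lf m))⁻¹ * ∑ i ∈ Finset.Ico (N (m - 1)) (N m), w (n - 1 - i) := by
              rw [Finset.mul_sum]
          _ ≤ (S w (Lf m))⁻¹ * S w (N m - N (m - 1)) :=
              mul_le_mul_right (sum_w_le w hw n _ _ hm1.le) _
          _ = (S w (Lf m))⁻¹ * S w (Lf m) := by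
              rw [show N m - N (m - 1) = Lf m from by omega]
          _ = 1 := inv_mul_cancel₀ hpos.ne'
    -- part 3
    have hpart3 : ∑ i ∈ Finset.Ico (N m) n, a i * w (n - 1 - i) ≤ 1 := by
      have hNm : N (m + 1) = N m + Lf (m + 1) := hNsucc m
      have hpos := hSLf_pos (m + 1) (by omega)
      calc ∑ i ∈ Finset.Ico (N m) n, a i * w (n - 1 - i)
          ≤ ∑ i ∈ Finset.Ico (N m) n, (S w (Lf (m + 1)))⁻¹ * w (n - 1 - i) := by
            refine Finset.sum_le_sum fun i hi => ?_
            rw [Finset.mem_Ico] at hi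
            refine mul_le_mul_left (ha_le (m + 1) (by omega) i (by simpa using hi.1)
              (lt_of_lt_of_le hi.2 hm2)) _
        _ = (S w (Lf (m + 1)))⁻¹ * ∑ i ∈ Finset.Ico (N m) n, w (n - 1 - i) := by
            rw [Finset.mul_sum]
        _ ≤ (S w (Lf (m + 1)))⁻¹ * S w (n - N m) :=
            mul_le_mul_right (sum_w_le w hw n _ _ le_rfl) _
        _ ≤ (S w (Lf (m + 1)))⁻¹ * S w (Lf (m + 1)) :=
            mul_le_mul_right (S_mono w (by omega)) _
        _ = 1 := inv_mul_cancel₀ hpos.ne'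
    calc ∑ i ∈ Finset.range n, a i * w (n - 1 - i)
        = _ + _ + _ := hsplit
      _ ≤ 1 + 1 + 1 := add_le_add (add_le_add hpart1 hpart2) hpart3
      _ = 3 := by norm_num
  -- assemble
  refine ⟨a, ha_anti, ?_⟩
  have hsup : (⨆ n : ℕ, ∑ i ∈ Finset.range n, ((a i * w (n - 1 - i) : ℝ≥0) : ℝ≥0∞))
      ≤ (3 : ℝ≥0∞) := by
    refine iSup_le fun n => ?_
    rw [← ENNReal.coe_finset_sum]
    exact_mod_cast hconv n
  have htsum : ((K : ℝ≥0) : ℝ≥0∞) ≤ 2 * ∑' i : ℕ, ((a i * w i : ℝ≥0) : ℝ≥0∞) := by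
    have h1 := hlow K le_rfl
    calc ((K : ℝ≥0) : ℝ≥0∞)
        ≤ ((2 * ∑ i ∈ Finset.range (N K), a i * w i : ℝ≥0) : ℝ≥0∞) :=
          ENNReal.coe_le_coe.2 h1
      _ = 2 * ∑ i ∈ Finset.range (N K), ((a i * w i : ℝ≥0) : ℝ≥0∞) := by
          rw [ENNReal.coe_mul, ENNReal.coe_finset_sum]
          norm_num
      _ ≤ 2 * ∑' i : ℕ, ((a i * w i : ℝ≥0) : ℝ≥0∞) :=
          mul_le_mul_right (ENNReal.sum_le_tsum _) _
  have hC3 : (C : ℝ≥0∞) * 3 < ∑' i : ℕ, ((a i * w i : ℝ≥0) : ℝ≥0∞) := by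
    rw [← ENNReal.mul_lt_mul_iff_right (a := 2) two_ne_zero ENNReal.ofNat_ne_top]
    refine lt_of_lt_of_le ?_ htsum
    have : (2 : ℝ≥0∞) * ((C : ℝ≥0∞) * 3) = ((6 * C : ℝ≥0) : ℝ≥0∞) := by
      push_cast
      ring
    rw [this]
    exact_mod_cast hK
  exact lt_of_le_of_lt (mul_le_mul_right hsup _) hC3
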